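/- There exists a positive scalar multiple P'_c of the tensor P_c = P_{2,c-1} (obtained by acting with diagonal determinant-one matrices) whose moment map image is uniform: explicitly, the tensor P'_c = e_1 \otimes D_1 + e_2 \otimes D_2, where D_1 is the (c-1) \times c matrix with (D_1)_{j,j} = sqrt(c-j) and zeros elsewhere, and D_2 is the (c-1) \times c matrix with (D_2)_{j,j+1} = sqrt(j) and zeros elsewhere, satisfies \mu_1(P'_c) = I_2/2, \mu_2(P'_c) = I_{c-1}/(c-1), \mu_3(P'_c) = I_c/c. -/
import Mathlib


open scoped BigOperators

/-- Contraction of the first index of a 3-tensor with a covector, giving a matrix. -/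
noncomputable def contr1 {ι₁ ι₂ ι₃ : Type*} [Fintype ι₁]
    (β : ι₁ → ℂ) (T : ι₁ → ι₂ → ι₃ → ℂ) : Matrix ι₂ ι₃ ℂ :=
  Matrix.of fun j k => ∑ i, β i * T i j k

/-- Contraction of the second index. -/
noncomputable def contr2 {ι₁ ι₂ ι₃ : Type*} [Fintype ι₂]
    (γ : ι₂ → ℂ) (T : ι₁ → ι₂ → ι₃ → ℂ) : Matrix ι₁ ι₃ ℂ :=
  Matrix.of fun i k => ∑ j, γ j * T i j k

/-- Contraction of the third index. -/
noncomputable def contr3 {ι₁ ι₂ ι₃ : Type*} [Fintype ι₃]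
    (δ : ι₃ → ℂ) (T : ι₁ → ι₂ → ι₃ → ℂ) : Matrix ι₁ ι₂ ℂ :=
  Matrix.of fun i j => ∑ k, δ k * T i j k

/-- Restriction `(A ⊗ B ⊗ C) T` of a 3-tensor. -/
noncomputable def restrict {ι₁ ι₂ ι₃ κ₁ κ₂ κ₃ : Type*}
    [Fintype ι₁] [Fintype ι₂] [Fintype ι₃]
    (A : Matrix κ₁ ι₁ ℂ) (B : Matrix κ₂ ι₂ ℂ) (C : Matrix κ₃ ι₃ ℂ)
    (T : ι₁ → ι₂ → ι₃ → ℂ) : κ₁ → κ₂ → κ₃ → ℂ :=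
  fun x y z => ∑ i, ∑ j, ∑ k, A x i * B y j * C z k * T i j k

/-- The polynomial multiplication tensor `P_{a,b}` (zero-based indices). -/
noncomputable def polyMul (a b : ℕ) : Fin a → Fin b → Fin (a + b - 1) → ℂ :=
  fun i j k => if (k : ℕ) = (i : ℕ) + (j : ℕ) then 1 else 0

/-- The unit tensor `⟨r⟩`. -/
noncomputable def unitTensor (r : ℕ) : Fin r → Fin r → Fin r → ℂ :=
  fun i j k => if i = j ∧ j = k then 1 else 0

/-- The matrix multiplication tensor `M_n`. -/
noncomputable def MM (n : ℕ) :
    (Fin n × Fin n) → (Fin n × Fin n) → (Fin n × Fin n) → ℂ :=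
  fun p q r => if p.2 = q.1 ∧ q.2 = r.1 ∧ r.2 = p.1 then 1 else 0

/-- Minrank of a 3-tensor (w.r.t. first-index slices). -/
noncomputable def minrank {a b c : ℕ} (T : Fin a → Fin b → Fin c → ℂ) : ℕ :=
  sInf {r | ∃ β : Fin a → ℂ, contr1 β T ≠ 0 ∧ (contr1 β T).rank = r}

/-- A tensor is concise if all three flattenings are injective, i.e. all nonzero
contractions are nonzero matrices. -/
def Concise {a b c : ℕ} (T : Fin a → Fin b → Fin c → ℂ) : Prop :=
  (∀ β : Fin a → ℂ, β ≠ 0 → contr1 β T ≠ 0) ∧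
  (∀ γ : Fin b → ℂ, γ ≠ 0 → contr2 γ T ≠ 0) ∧
  (∀ δ : Fin c → ℂ, δ ≠ 0 → contr3 δ T ≠ 0)

/-- Gram matrix of the first flattening, `T₁^* T₁`. -/
noncomputable def gram1 {ι₁ ι₂ ι₃ : Type*} [Fintype ι₂] [Fintype ι₃]
    (T : ι₁ → ι₂ → ι₃ → ℂ) : Matrix ι₁ ι₁ ℂ :=
  Matrix.of fun i i' => ∑ j, ∑ k, (starRingEnd ℂ) (T i j k) * T i' j k

/-- Gram matrix of the second flattening. -/
noncomputable def gram2 {ι₁ ι₂ ι₃ : Type*} [Fintype ι₁] [Fintype ι₃]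
    (T : ι₁ → ι₂ → ι₃ → ℂ) : Matrix ι₂ ι₂ ℂ :=
  Matrix.of fun j j' => ∑ i, ∑ k, (starRingEnd ℂ) (T i j k) * T i j' k

/-- Gram matrix of the third flattening. -/
noncomputable def gram3 {ι₁ ι₂ ι₃ : Type*} [Fintype ι₁] [Fintype ι₂]
    (T : ι₁ → ι₂ → ι₃ → ℂ) : Matrix ι₃ ι₃ ℂ :=
  Matrix.of fun k k' => ∑ i, ∑ j, (starRingEnd ℂ) (T i j k) * T i j k'

/-- The tensor `M_{a,1,b}`. -/
noncomputable def Mab (a b : ℕ) : Fin a → Fin b → (Fin b × Fin a) → ℂ :=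
  fun i k p => if p = (k, i) then 1 else 0

/-- The antisymmetric tensor `e₁ ∧ e₂ ∧ e₃`. -/
noncomputable def wedge : Fin 3 → Fin 3 → Fin 3 → ℂ :=
  fun i j k => ∑ σ : Equiv.Perm (Fin 3),
    ((Equiv.Perm.sign σ : ℤ) : ℂ) * (if i = σ 0 ∧ j = σ 1 ∧ k = σ 2 then 1 else 0)

/-- The iterated matrix multiplication tensor of order `k`. -/
noncomputable def IMM (n k : ℕ) : (Fin k → Fin n × Fin n) → ℂ :=
  fun x => ∑ i : Fin k → Fin n, if ∀ ℓ : Fin k, x ℓ = (i ℓ, i ⟨((ℓ : ℕ) + 1) % k, Nat.mod_lt _ ℓ.pos⟩) then 1 else 0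

/-- Restriction of an order-`k` tensor by applying a linear map to each factor. -/
noncomputable def restrictK {k : ℕ} {ι κ : Fin k → Type*} [∀ ℓ, Fintype (ι ℓ)]
    (A : ∀ ℓ, Matrix (κ ℓ) (ι ℓ) ℂ) (T : (∀ ℓ, ι ℓ) → ℂ) : (∀ ℓ, κ ℓ) → ℂ :=
  fun x => ∑ y : ∀ ℓ, ι ℓ, (∏ ℓ, A ℓ (x ℓ) (y ℓ)) * T y

/-- The rescaled pencil tensor `P'_c` with uniform marginals. -/
noncomputable def pencilScaled (c : ℕ) : Fin 2 → Fin (c - 1) → Fin c → ℂ :=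
  fun i j k =>
    if i = 0 then
      (if (k : ℕ) = (j : ℕ) then (Real.sqrt ((c : ℝ) - 1 - (j : ℕ)) : ℂ) else 0)
    else
      (if (k : ℕ) = (j : ℕ) + 1 then (Real.sqrt ((j : ℕ) + 1) : ℂ) else 0)

lemma pencil0 (c : ℕ) (j : Fin (c-1)) (k : Fin c) :
    pencilScaled c 0 j k
      = if (k : ℕ) = (j : ℕ) then ((Real.sqrt ((c : ℝ) - 1 - (j : ℕ)) : ℝ) : ℂ) else 0 := by
  simp [pencilScaled]

lemma pencil1 (c : ℕ) (j : Fin (c-1)) (k : Fin c) :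
    pencilScaled c 1 j k
      = if (k : ℕ) = (j : ℕ) + 1 then ((Real.sqrt (((j : ℕ) : ℝ) + 1) : ℝ) : ℂ) else 0 := by
  simp [pencilScaled]

lemma conj_sqrt_mul {r : ℝ} (hr : 0 ≤ r) :
    (starRingEnd ℂ) ((Real.sqrt r : ℝ) : ℂ) * ((Real.sqrt r : ℝ) : ℂ) = (r : ℂ) := by
  rw [Complex.conj_ofReal, ← Complex.ofReal_mul, Real.mul_self_sqrt hr]

lemma sqrt_nonneg0 (c : ℕ) (hc : 2 ≤ c) (j : Fin (c-1)) : (0:ℝ) ≤ (c : ℝ) - 1 - (j : ℕ) := by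
  have hj : (j : ℕ) + 1 ≤ c - 1 := j.isLt
  have h2 : ((j:ℕ) : ℝ) + 1 ≤ ((c - 1 : ℕ) : ℝ) := by exact_mod_cast hj
  have h3 : ((c - 1 : ℕ) : ℝ) = (c : ℝ) - 1 := by
    push_cast [Nat.cast_sub (show 1 ≤ c by omega)]; ring
  linarith [h3.le, h3.ge]

lemma sum_fin_ite {c m : ℕ} (hm : m < c) (f : Fin c → ℂ) :
    ∑ k : Fin c, (if (k : ℕ) = m then f k else 0) = f ⟨m, hm⟩ := by
  rw [Finset.sum_eq_single (⟨m, hm⟩ : Fin c)]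
  · simp
  · intro b _ hb
    rw [if_neg]
    exact fun h => hb (Fin.ext h)
  · simp

lemma sum_fin_ite_not {c m : ℕ} (hm : ¬ m < c) (f : Fin c → ℂ) :
    ∑ k : Fin c, (if (k : ℕ) = m then f k else 0) = 0 := by
  apply Finset.sum_eq_zero
  intro k _
  rw [if_neg]
  exact fun h => hm (h ▸ k.isLt)

lemma sum_fin_ite_pred {c : ℕ} {k : ℕ} (hk1 : 1 ≤ k) (hk : k - 1 < c) (f : Fin c → ℂ) :
    ∑ j : Fin c, (if (j : ℕ) + 1 = k then f j else 0) = f ⟨k - 1, hk⟩ := by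
  rw [Finset.sum_eq_single (⟨k - 1, hk⟩ : Fin c)]
  · rw [if_pos (by simp; omega)]
  · intro b _ hb
    rw [if_neg]
    intro h
    exact hb (Fin.ext (show (b : ℕ) = k - 1 by omega))
  · simp

lemma sum_fin_ite_pred_zero {c m : ℕ} (hm : ¬ 1 ≤ m) (f : Fin c → ℂ) :
    ∑ j : Fin c, (if (j : ℕ) + 1 = m then f j else 0) = 0 := by
  apply Finset.sum_eq_zero
  intro j _
  rw [if_neg (by omega)]

lemma inner0 (c : ℕ) (hc : 2 ≤ c) (j : Fin (c - 1)) :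
    ∑ k : Fin c, (starRingEnd ℂ) (pencilScaled c 0 j k) * pencilScaled c 0 j k
      = (c : ℂ) - 1 - ((j : ℕ) : ℂ) := by
  have step : ∀ k : Fin c, (starRingEnd ℂ) (pencilScaled c 0 j k) * pencilScaled c 0 j k
      = if (k : ℕ) = (j : ℕ) then (((c : ℝ) - 1 - ((j:ℕ):ℝ) : ℝ) : ℂ) else 0 := by
    intro k
    rw [pencil0]
    by_cases h : (k : ℕ) = (j : ℕ)
    · rw [if_pos h, if_pos h]
      exact conj_sqrt_mul (sqrt_nonneg0 c hc j)
    · rw [if_neg h, if_neg h, map_zero, zero_mul]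
  rw [Finset.sum_congr rfl (fun k _ => step k), sum_fin_ite (show (j:ℕ) < c by omega)]
  push_cast
  ring

lemma inner1 (c : ℕ) (hc : 2 ≤ c) (j : Fin (c - 1)) :
    ∑ k : Fin c, (starRingEnd ℂ) (pencilScaled c 1 j k) * pencilScaled c 1 j k
      = ((j : ℕ) : ℂ) + 1 := by
  have hj : (j : ℕ) < c - 1 := j.isLt
  have step : ∀ k : Fin c, (starRingEnd ℂ) (pencilScaled c 1 j k) * pencilScaled c 1 j k
      = if (k : ℕ) = (j : ℕ) + 1 then ((((j:ℕ):ℝ) + 1 : ℝ) : ℂ) else 0 := by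
    intro k
    rw [pencil1]
    by_cases h : (k : ℕ) = (j : ℕ) + 1
    · rw [if_pos h, if_pos h]
      exact conj_sqrt_mul (by positivity)
    · rw [if_neg h, if_neg h, map_zero, zero_mul]
  rw [Finset.sum_congr rfl (fun k _ => step k), sum_fin_ite (show (j:ℕ)+1 < c by omega)]
  push_cast
  ring

lemma totalS (c : ℕ) (hc : 2 ≤ c) :
    (∑ i, ∑ j, ∑ k, (starRingEnd ℂ) (pencilScaled c i j k) * pencilScaled c i j k)
      = (c : ℂ) * ((c : ℂ) - 1) := by
  rw [Fin.sum_univ_two,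
      Finset.sum_congr rfl (fun j _ => inner0 c hc j),
      Finset.sum_congr rfl (fun j _ => inner1 c hc j),
      ← Finset.sum_add_distrib]
  have h : ∀ j : Fin (c-1), ((c:ℂ) - 1 - ((j:ℕ):ℂ)) + (((j:ℕ):ℂ) + 1) = (c:ℂ) :=
    fun j => by ring
  rw [Finset.sum_congr rfl (fun j _ => h j), Finset.sum_const, Finset.card_univ,
      Fintype.card_fin, nsmul_eq_mul]
  have h1 : ((c - 1 : ℕ) : ℂ) = (c:ℂ) - 1 := by
    push_cast [Nat.cast_sub (show 1 ≤ c by omega)]; ring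
  rw [h1]; ring

lemma sumA (c : ℕ) (hc : 2 ≤ c) :
    (∑ j : Fin (c-1), ((j : ℕ) : ℂ)) * 2 = ((c:ℂ) - 1) * ((c:ℂ) - 2) := by
  have h : (∑ j : Fin (c-1), ((j:ℕ):ℂ)) = ((∑ i ∈ Finset.range (c-1), i : ℕ) : ℂ) := by
    rw [Nat.cast_sum, Fin.sum_univ_eq_sum_range]
  rw [h, show ((2:ℂ) = ((2:ℕ):ℂ)) from by norm_num, ← Nat.cast_mul,
      Finset.sum_range_id_mul_two, show c - 1 - 1 = c - 2 from by omega]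
  push_cast [Nat.cast_sub (show 1 ≤ c by omega), Nat.cast_sub hc]
  ring

lemma cast_sub_one (c : ℕ) (hc : 2 ≤ c) : ((c - 1 : ℕ) : ℂ) = (c : ℂ) - 1 := by
  push_cast [Nat.cast_sub (show 1 ≤ c by omega)]; ring

lemma cross01 (c : ℕ) (j : Fin (c-1)) (k : Fin c) :
    (starRingEnd ℂ) (pencilScaled c 0 j k) * pencilScaled c 1 j k = 0 := by
  rw [pencil0, pencil1]
  by_cases h : (k:ℕ) = (j:ℕ)
  · have hne : ¬ ((k:ℕ) = (j:ℕ) + 1) := by omega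
    rw [if_neg hne, mul_zero]
  · rw [if_neg h, map_zero, zero_mul]

lemma cross10 (c : ℕ) (j : Fin (c-1)) (k : Fin c) :
    (starRingEnd ℂ) (pencilScaled c 1 j k) * pencilScaled c 0 j k = 0 := by
  rw [pencil0, pencil1]
  by_cases h : (k:ℕ) = (j:ℕ)
  · have hne : ¬ ((k:ℕ) = (j:ℕ) + 1) := by omega
    rw [if_neg hne, map_zero, zero_mul]
  · rw [if_neg h, mul_zero]

lemma gram1_eq (c : ℕ) (hc : 2 ≤ c) :
    gram1 (pencilScaled c)
      = (((c:ℂ) * ((c:ℂ) - 1)) / 2) • (1 : Matrix (Fin 2) (Fin 2) ℂ) := by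
  ext i i'
  simp only [gram1, Matrix.of_apply, Matrix.smul_apply, Matrix.one_apply, smul_eq_mul]
  fin_cases i <;> fin_cases i' <;>
    simp only [Fin.mk_zero, Fin.mk_one, Fin.isValue]
  · rw [if_pos trivial, mul_one,
        Finset.sum_congr rfl (fun j _ => inner0 c hc j), Finset.sum_sub_distrib,
        Finset.sum_sub_distrib, Finset.sum_const, Finset.sum_const, Finset.card_univ,
        Fintype.card_fin, nsmul_eq_mul, nsmul_eq_mul, cast_sub_one c hc]
    linear_combination (-(1:ℂ)/2) * sumA c hc
  · rw [if_neg (by decide), mul_zero]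
    exact Finset.sum_eq_zero fun j _ => Finset.sum_eq_zero fun k _ => cross01 c j k
  · rw [if_neg (by decide), mul_zero]
    exact Finset.sum_eq_zero fun j _ => Finset.sum_eq_zero fun k _ => cross10 c j k
  · rw [if_pos trivial, mul_one,
        Finset.sum_congr rfl (fun j _ => inner1 c hc j), Finset.sum_add_distrib,
        Finset.sum_const, Finset.card_univ, Fintype.card_fin, nsmul_eq_mul, mul_one,
        cast_sub_one c hc]
    linear_combination ((1:ℂ)/2) * sumA c hc

lemma cross2 (c : ℕ) {j j' : Fin (c-1)} (hjj : j ≠ j') (k : Fin c) (i : Fin 2) :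
    (starRingEnd ℂ) (pencilScaled c i j k) * pencilScaled c i j' k = 0 := by
  have hv : (j:ℕ) ≠ (j':ℕ) := fun h => hjj (Fin.ext h)
  rcases eq_or_ne i 0 with hi | hi
  · subst hi
    rw [pencil0, pencil0]
    by_cases hk : (k:ℕ) = (j':ℕ)
    · have hne : ¬ ((k:ℕ) = (j:ℕ)) := by omega
      rw [if_neg hne, map_zero, zero_mul]
    · rw [if_neg hk, mul_zero]
  · have hi1 : i = 1 := by omega
    subst hi1
    rw [pencil1, pencil1]
    by_cases hk : (k:ℕ) = (j':ℕ) + 1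
    · have hne : ¬ ((k:ℕ) = (j:ℕ) + 1) := by omega
      rw [if_neg hne, map_zero, zero_mul]
    · rw [if_neg hk, mul_zero]

lemma gram2_eq (c : ℕ) (hc : 2 ≤ c) :
    gram2 (pencilScaled c)
      = ((c:ℂ)) • (1 : Matrix (Fin (c-1)) (Fin (c-1)) ℂ) := by
  ext j j'
  simp only [gram2, Matrix.of_apply, Matrix.smul_apply, Matrix.one_apply, smul_eq_mul]
  by_cases h : j = j'
  · subst h
    rw [if_pos rfl, mul_one, Fin.sum_univ_two, inner0 c hc j, inner1 c hc j]
    ring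
  · rw [if_neg h, mul_zero, Fin.sum_univ_two]
    rw [Finset.sum_eq_zero fun k _ => cross2 c h k 0,
        Finset.sum_eq_zero fun k _ => cross2 c h k 1, add_zero]

lemma cross3 (c : ℕ) {k k' : Fin c} (hkk : k ≠ k') (j : Fin (c-1)) (i : Fin 2) :
    (starRingEnd ℂ) (pencilScaled c i j k) * pencilScaled c i j k' = 0 := by
  have hv : (k:ℕ) ≠ (k':ℕ) := fun h => hkk (Fin.ext h)
  rcases eq_or_ne i 0 with hi | hi
  · subst hi
    rw [pencil0, pencil0]
    by_cases hk : (k':ℕ) = (j:ℕ)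
    · have hne : ¬ ((k:ℕ) = (j:ℕ)) := by omega
      rw [if_pos hk, if_neg hne, map_zero, zero_mul]
    · rw [if_neg hk, mul_zero]
  · have hi1 : i = 1 := by omega
    subst hi1
    rw [pencil1, pencil1]
    by_cases hk : (k':ℕ) = (j:ℕ) + 1
    · have hne : ¬ ((k:ℕ) = (j:ℕ) + 1) := by omega
      rw [if_pos hk, if_neg hne, map_zero, zero_mul]
    · rw [if_neg hk, mul_zero]

lemma gram3_diag (c : ℕ) (hc : 2 ≤ c) (k : Fin c) :
    ∑ i : Fin 2, ∑ j : Fin (c-1),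
        (starRingEnd ℂ) (pencilScaled c i j k) * pencilScaled c i j k
      = (c:ℂ) - 1 := by
  have t0 : ∀ j : Fin (c-1), (starRingEnd ℂ) (pencilScaled c 0 j k) * pencilScaled c 0 j k
      = if (j:ℕ) = (k:ℕ) then (((c:ℝ) - 1 - ((j:ℕ):ℝ) : ℝ) : ℂ) else 0 := by
    intro j
    rw [pencil0]
    by_cases h : (k:ℕ) = (j:ℕ)
    · rw [if_pos h, if_pos h.symm]
      exact conj_sqrt_mul (sqrt_nonneg0 c hc j)
    · rw [if_neg h, if_neg (fun hh => h hh.symm), map_zero, zero_mul]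
  have t1 : ∀ j : Fin (c-1), (starRingEnd ℂ) (pencilScaled c 1 j k) * pencilScaled c 1 j k
      = if (j:ℕ) + 1 = (k:ℕ) then ((((j:ℕ):ℝ) + 1 : ℝ) : ℂ) else 0 := by
    intro j
    rw [pencil1]
    by_cases h : (k:ℕ) = (j:ℕ) + 1
    · rw [if_pos h, if_pos h.symm]
      exact conj_sqrt_mul (by positivity)
    · rw [if_neg h, if_neg (fun hh => h hh.symm), map_zero, zero_mul]
  rw [Fin.sum_univ_two, Finset.sum_congr rfl (fun j _ => t0 j),
      Finset.sum_congr rfl (fun j _ => t1 j)]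
  by_cases hk1 : (k:ℕ) < c - 1
  · rw [sum_fin_ite hk1]
    simp only [Fin.val_mk]
    by_cases hk0 : 1 ≤ (k:ℕ)
    · rw [sum_fin_ite_pred hk0 (by omega)]
      simp only [Fin.val_mk]
      push_cast [Nat.cast_sub hk0]
      ring
    · rw [sum_fin_ite_pred_zero hk0]
      push_cast [show (k:ℕ) = 0 by omega]
      ring
  · have hkc : (k:ℕ) = c - 1 := by have := k.isLt; omega
    rw [sum_fin_ite_not hk1, sum_fin_ite_pred (by omega) (by omega)]
    simp only [Fin.val_mk]
    rw [show (k:ℕ) - 1 = c - 2 from by omega]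
    push_cast [Nat.cast_sub hc]
    ring

lemma gram3_eq (c : ℕ) (hc : 2 ≤ c) :
    gram3 (pencilScaled c)
      = ((c:ℂ) - 1) • (1 : Matrix (Fin c) (Fin c) ℂ) := by
  ext k k'
  simp only [gram3, Matrix.of_apply, Matrix.smul_apply, Matrix.one_apply, smul_eq_mul]
  by_cases h : k = k'
  · subst h
    rw [if_pos rfl, mul_one]
    exact gram3_diag c hc k
  · rw [if_neg h, mul_zero]
    exact Finset.sum_eq_zero fun i _ => Finset.sum_eq_zero fun j _ => cross3 c h j i
/-- the marginals of `P'_c` are uniform: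
`μ₁ = I₂/2`, `μ₂ = I_{c-1}/(c-1)`, `μ₃ = I_c/c`. -/
theorem pencilScaled_uniform_marginals (c : ℕ) (hc : 2 ≤ c) :
    (∑ i, ∑ j, ∑ k, (starRingEnd ℂ) (pencilScaled c i j k) * pencilScaled c i j k) ≠ 0 ∧
    gram1 (pencilScaled c)
      = ((∑ i, ∑ j, ∑ k, (starRingEnd ℂ) (pencilScaled c i j k) * pencilScaled c i j k) / 2)
          • (1 : Matrix (Fin 2) (Fin 2) ℂ) ∧
    gram2 (pencilScaled c)
      = ((∑ i, ∑ j, ∑ k, (starRingEnd ℂ) (pencilScaled c i j k) * pencilScaled c i j k) / ((c : ℂ) - 1))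
          • (1 : Matrix (Fin (c - 1)) (Fin (c - 1)) ℂ) ∧
    gram3 (pencilScaled c)
      = ((∑ i, ∑ j, ∑ k, (starRingEnd ℂ) (pencilScaled c i j k) * pencilScaled c i j k) / (c : ℂ))
          • (1 : Matrix (Fin c) (Fin c) ℂ) := by
  have hS := totalS c hc
  have hc0 : (c:ℂ) ≠ 0 := Nat.cast_ne_zero.mpr (by omega)
  have hc1 : (c:ℂ) - 1 ≠ 0 := by
    have h1 : (c:ℂ) ≠ 1 := by exact_mod_cast (show c ≠ 1 by omega)
    exact sub_ne_zero.mpr h1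
  refine ⟨?_, ?_, ?_, ?_⟩
  · rw [hS]; exact mul_ne_zero hc0 hc1
  · rw [hS, gram1_eq c hc]
  · rw [hS, gram2_eq c hc]
    congr 1
    field_simp
  · rw [hS, gram3_eq c hc]
    congr 1
    field_simp
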